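/- Let p ≥ 1, γ > p − 1, and δ ≥ 0. Suppose Γ : {(s,t) : 0 ≤ s ≤ t ≤ T} → U takes values in a Banach space U, ω is a continuous superadditive control with ω(s,t) ≤ 1, and suppose: (i) for all s ≤ u ≤ t, ‖Γ_{s,t}‖ ≤ (1 + C ω(s,t)^{1/p})(‖Γ_{s,u}‖ + ‖Γ_{u,t}‖) + C ω(s,t)^{(γ+1)/p}; (ii) along a nested sequence of dyadic-type partitions {t_j^n} of [s,t] with ω(t_j^n, t_{j+1}^n) ≤ 2^{−n} ω(s,t), one has Σ_j ‖Γ_{t_j^n, t_{j+1}^n}‖ → 0 as n → ∞. Then there is a constant C' depending only on p, γ, C such that ‖Γ_{s,t}‖ ≤ C' ω(s,t)^{(γ+1)/p}. -/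
import Mathlib

open Filter

private lemma sum_range_two_mul' (f : ℕ → ℝ) (n : ℕ) :
    ∑ j ∈ Finset.range (2 * n), f j
      = ∑ i ∈ Finset.range n, (f (2 * i) + f (2 * i + 1)) := by
  induction n with
  | zero => simp
  | succ n ih =>
    have h : 2 * (n + 1) = (2 * n + 1) + 1 := by ring
    rw [h, Finset.sum_range_succ, Finset.sum_range_succ, ih, Finset.sum_range_succ, add_assoc]

private lemma geom_sum_le_inv' {r : ℝ} (h0 : 0 ≤ r) (h1 : r < 1) (N : ℕ) :
    ∑ n ∈ Finset.range N, r ^ n ≤ (1 - r)⁻¹ := by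
  rw [← tsum_geometric_of_lt_one h0 h1]
  exact Summable.sum_le_tsum _ (fun i _ => pow_nonneg h0 i) (summable_geometric_of_lt_one h0 h1)

/-- Abstract dyadic-subdivision estimate.  Let `p ≥ 1`, `γ > p − 1`, `C ≥ 0`.
Suppose `Γ : {0 ≤ s ≤ t ≤ T} → U` takes values in a Banach space `U` and `ω` is a continuous,
nonnegative, vanishing-on-the-diagonal, superadditive control on `[0,T]` with `ω ≤ 1`,
such that
(i) `‖Γ_{s,t}‖ ≤ (1 + C ω(s,t)^{1/p})(‖Γ_{s,u}‖ + ‖Γ_{u,t}‖) + C ω(s,t)^{(γ+1)/p}`, and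
(ii) along every nested dyadic-type family of partitions `{t_j^n}` of `[s,t]` with
`ω(t_j^n, t_{j+1}^n) ≤ 2^{−n} ω(s,t)` the sums `∑_j ‖Γ_{t_j^n, t_{j+1}^n}‖` tend to `0`.
Then there is a constant `C'` depending only on `p`, `γ`, `C` with
`‖Γ_{s,t}‖ ≤ C' ω(s,t)^{(γ+1)/p}`. -/
theorem dyadic_subdivision_estimate (p γ C : ℝ) (hp : 1 ≤ p) (hγ : p - 1 < γ) (hC : 0 ≤ C) :
    ∃ C' : ℝ, 0 ≤ C' ∧
      ∀ (U : Type) [NormedAddCommGroup U] [NormedSpace ℝ U] [CompleteSpace U],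
      ∀ (T : ℝ), 0 ≤ T →
      ∀ (Γ : ℝ → ℝ → U) (ω : ℝ → ℝ → ℝ),
        ContinuousOn (fun q : ℝ × ℝ => ω q.1 q.2)
          {q : ℝ × ℝ | 0 ≤ q.1 ∧ q.1 ≤ q.2 ∧ q.2 ≤ T} →
        (∀ s, 0 ≤ s → s ≤ T → ω s s = 0) →
        (∀ s t, 0 ≤ s → s ≤ t → t ≤ T → 0 ≤ ω s t) →
        (∀ s t, 0 ≤ s → s ≤ t → t ≤ T → ω s t ≤ 1) →
        (∀ s u t, 0 ≤ s → s ≤ u → u ≤ t → t ≤ T → ω s u + ω u t ≤ ω s t) →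
        -- (i)
        (∀ s u t, 0 ≤ s → s ≤ u → u ≤ t → t ≤ T →
          ‖Γ s t‖ ≤ (1 + C * ω s t ^ (1 / p)) * (‖Γ s u‖ + ‖Γ u t‖)
            + C * ω s t ^ ((γ + 1) / p)) →
        -- (ii)
        (∀ s t, 0 ≤ s → s ≤ t → t ≤ T →
          ∀ tt : ℕ → ℕ → ℝ,
            (∀ n, tt n 0 = s) →
            (∀ n, tt n (2 ^ n) = t) →
            (∀ n j, j < 2 ^ n → tt n j ≤ tt n (j + 1)) →
            (∀ n j, j ≤ 2 ^ n → tt (n + 1) (2 * j) = tt n j) →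
            (∀ n j, j < 2 ^ n → ω (tt n j) (tt n (j + 1)) ≤ (2 : ℝ) ^ (-(n : ℝ)) * ω s t) →
            Tendsto (fun n => ∑ j ∈ Finset.range (2 ^ n), ‖Γ (tt n j) (tt n (j + 1))‖)
              atTop (nhds 0)) →
        ∀ s t, 0 ≤ s → s ≤ t → t ≤ T →
          ‖Γ s t‖ ≤ C' * ω s t ^ ((γ + 1) / p) := by
  have hp0 : 0 < p := lt_of_lt_of_le one_pos hp
  have hpinv : (0:ℝ) < 1 / p := by positivity
  set θ : ℝ := (γ + 1) / p - 1 with hθdef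
  have hθ : 0 < θ := by
    have h1 : 1 < (γ + 1) / p := (one_lt_div hp0).mpr (by linarith)
    simp only [hθdef]; linarith
  have hepos : (0:ℝ) < (γ + 1) / p := by simp only [hθdef] at hθ; linarith
  set q1 : ℝ := (2 : ℝ) ^ (-(1 / p)) with hq1def
  set q2 : ℝ := (2 : ℝ) ^ (-θ) with hq2def
  have hq1pos : 0 < q1 := Real.rpow_pos_of_pos two_pos _
  have hq1lt : q1 < 1 :=
    Real.rpow_lt_one_of_one_lt_of_neg one_lt_two (by linarith)
  have hq2pos : 0 < q2 := Real.rpow_pos_of_pos two_pos _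
  have hq2lt : q2 < 1 :=
    Real.rpow_lt_one_of_one_lt_of_neg one_lt_two (by linarith)
  set K : ℝ := Real.exp (C * (1 - q1)⁻¹) with hKdef
  have hKpos : 0 < K := Real.exp_pos _
  refine ⟨K * (C * (1 - q2)⁻¹), ?_, ?_⟩
  · have h2 : (0:ℝ) ≤ (1 - q2)⁻¹ := inv_nonneg.mpr (by linarith)
    exact mul_nonneg hKpos.le (mul_nonneg hC h2)
  intro U _ _ _ T hT Γ ω hωc hdiag hωnn hω1 hsuper hHi hHii s t hs hst htT
  have hsT : s ≤ T := le_trans hst htT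
  have ht0 : 0 ≤ t := le_trans hs hst
  -- bisection point via IVT
  have hbis : ∀ ab : ℝ × ℝ, ∃ u : ℝ, 0 ≤ ab.1 → ab.1 ≤ ab.2 → ab.2 ≤ T →
      ab.1 ≤ u ∧ u ≤ ab.2 ∧ ω ab.1 u ≤ ω ab.1 ab.2 / 2 ∧ ω u ab.2 ≤ ω ab.1 ab.2 / 2 := by
    rintro ⟨a, b⟩
    by_cases h : 0 ≤ a ∧ a ≤ b ∧ b ≤ T
    · obtain ⟨ha, hab, hbT⟩ := h
      have hf1 : ContinuousOn (fun u => ω a u) (Set.Icc a b) := by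
        refine hωc.comp ((Continuous.prodMk_right a).continuousOn) ?_
        intro u hu; exact ⟨ha, hu.1, le_trans hu.2 hbT⟩
      have hf2 : ContinuousOn (fun u => ω u b) (Set.Icc a b) := by
        refine hωc.comp ((continuous_id.prodMk continuous_const).continuousOn) ?_
        intro u hu; exact ⟨le_trans ha hu.1, hu.2, hbT⟩
      have hf : ContinuousOn (fun u => ω a u - ω u b) (Set.Icc a b) := hf1.sub hf2
      have hωabnn : 0 ≤ ω a b := hωnn a b ha hab hbT
      have hmem : (0 : ℝ) ∈
          Set.Icc ((fun u => ω a u - ω u b) a) ((fun u => ω a u - ω u b) b) := by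
        constructor
        · simp only
          rw [hdiag a ha (le_trans hab hbT)]
          linarith
        · simp only
          rw [hdiag b (le_trans ha hab) hbT]
          linarith
      obtain ⟨u, hu, hfu⟩ := intermediate_value_Icc hab hf hmem
      have heq : ω a u = ω u b := by
        have : ω a u - ω u b = 0 := hfu
        linarith
      have hsup := hsuper a u b ha hu.1 hu.2 hbT
      exact ⟨u, fun _ _ _ => ⟨hu.1, hu.2, by linarith, by linarith⟩⟩
    · exact ⟨a, fun h1 h2 h3 => absurd ⟨h1, h2, h3⟩ h⟩
  choose M hM using hbis
  -- the dyadic partition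
  obtain ⟨F, hF0, hFs⟩ : ∃ F : ℕ → ℕ → ℝ,
      (∀ j, F 0 j = if j = 0 then s else t) ∧
      (∀ n j, F (n + 1) j =
        if j % 2 = 0 then F n (j / 2) else M (F n (j / 2), F n (j / 2 + 1))) :=
    ⟨fun n => Nat.rec (fun j => if j = 0 then s else t)
      (fun _ prev j => if j % 2 = 0 then prev (j / 2) else M (prev (j / 2), prev (j / 2 + 1))) n,
      fun _ => rfl, fun _ _ => rfl⟩
  have hFeven : ∀ n i, F (n + 1) (2 * i) = F n i := by
    intro n i
    rw [hFs]
    have h1 : (2 * i) % 2 = 0 := by omega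
    have h2 : (2 * i) / 2 = i := by omega
    simp [h1, h2]
  have hFodd : ∀ n i, F (n + 1) (2 * i + 1) = M (F n i, F n (i + 1)) := by
    intro n i
    rw [hFs]
    have h1 : (2 * i + 1) % 2 = 1 := by omega
    have h2 : (2 * i + 1) / 2 = i := by omega
    simp [h1, h2]
  -- invariants
  have inv : ∀ n, F n 0 = s ∧ F n (2 ^ n) = t ∧
      (∀ j, j ≤ 2 ^ n → s ≤ F n j ∧ F n j ≤ t) ∧
      (∀ j, j < 2 ^ n → F n j ≤ F n (j + 1)) ∧
      (∀ j, j < 2 ^ n → ω (F n j) (F n (j + 1)) ≤ (2 : ℝ) ^ (-(n : ℝ)) * ω s t) := by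
    intro n
    induction n with
    | zero =>
      refine ⟨by simp [hF0], by simp [hF0], ?_, ?_, ?_⟩
      · intro j hj
        interval_cases j <;> simp [hF0, hst]
      · intro j hj
        interval_cases j
        simp [hF0, hst]
      · intro j hj
        interval_cases j
        simp [hF0]
    | succ n ih =>
      obtain ⟨ih0, ihN, ihmem, ihmono, ihω⟩ := ih
      have hMspec : ∀ i, i < 2 ^ n →
          F n i ≤ M (F n i, F n (i + 1)) ∧ M (F n i, F n (i + 1)) ≤ F n (i + 1) ∧
          ω (F n i) (M (F n i, F n (i + 1))) ≤ ω (F n i) (F n (i + 1)) / 2 ∧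
          ω (M (F n i, F n (i + 1))) (F n (i + 1)) ≤ ω (F n i) (F n (i + 1)) / 2 := by
        intro i hi
        exact hM (F n i, F n (i + 1)) (le_trans hs (ihmem i hi.le).1) (ihmono i hi)
          (le_trans (ihmem (i + 1) hi).2 htT)
      have h2n : (2:ℕ) ^ (n + 1) = 2 * 2 ^ n := by rw [pow_succ]; ring
      have hhalf : (2 : ℝ) ^ (-((n + 1 : ℕ) : ℝ)) = (2 : ℝ) ^ (-(n : ℝ)) / 2 := by
        push_cast
        rw [neg_add, Real.rpow_add two_pos]
        simp [Real.rpow_neg_one]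
        ring
      refine ⟨?_, ?_, ?_, ?_, ?_⟩
      · have := hFeven n 0
        simpa [ih0] using this
      · rw [h2n, hFeven]; exact ihN
      · intro j hj
        rw [h2n] at hj
        obtain ⟨i, rfl | rfl⟩ := Nat.even_or_odd' j
        · rw [hFeven]
          exact ihmem i (by omega)
        · have hi : i < 2 ^ n := by omega
          rw [hFodd]
          obtain ⟨hm1, hm2, _, _⟩ := hMspec i hi
          exact ⟨le_trans (ihmem i hi.le).1 hm1, le_trans hm2 (ihmem (i + 1) hi).2⟩
      · intro j hj
        rw [h2n] at hj
        obtain ⟨i, rfl | rfl⟩ := Nat.even_or_odd' j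
        · have hi : i < 2 ^ n := by omega
          rw [hFeven, hFodd]
          exact (hMspec i hi).1
        · have hi : i < 2 ^ n := by omega
          have h21 : 2 * i + 1 + 1 = 2 * (i + 1) := by ring
          rw [h21, hFeven, hFodd]
          exact (hMspec i hi).2.1
      · intro j hj
        rw [h2n] at hj
        rw [hhalf]
        obtain ⟨i, rfl | rfl⟩ := Nat.even_or_odd' j
        · have hi : i < 2 ^ n := by omega
          rw [hFeven, hFodd]
          have h1 := (hMspec i hi).2.2.1
          have h2 := ihω i hi
          linarith
        · have hi : i < 2 ^ n := by omega
          have h21 : 2 * i + 1 + 1 = 2 * (i + 1) := by ring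
          rw [h21, hFeven, hFodd]
          have h1 := (hMspec i hi).2.2.2
          have h2 := ihω i hi
          linarith
  -- sum of ω along partition
  have hchain : ∀ n, ∀ m, m ≤ 2 ^ n →
      ∑ j ∈ Finset.range m, ω (F n j) (F n (j + 1)) ≤ ω s (F n m) := by
    intro n m
    induction m with
    | zero =>
      intro _
      rw [Finset.sum_range_zero, (inv n).1, hdiag s hs hsT]
    | succ m ih =>
      intro hm
      rw [Finset.sum_range_succ]
      have h1 := ih (by omega)
      have hmm : m < 2 ^ n := by omega
      have hsup := hsuper s (F n m) (F n (m + 1)) hs ((inv n).2.2.1 m hmm.le).1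
        ((inv n).2.2.2.1 m hmm) (le_trans ((inv n).2.2.1 (m + 1) hm).2 htT)
      linarith
  have hsumω : ∀ n, ∑ j ∈ Finset.range (2 ^ n), ω (F n j) (F n (j + 1)) ≤ ω s t := by
    intro n
    have := hchain n (2 ^ n) le_rfl
    rwa [(inv n).2.1] at this
  set ω0 : ℝ := ω s t with hω0def
  have hω0nn : 0 ≤ ω0 := hωnn s t hs hst htT
  have hω0le1 : ω0 ≤ 1 := hω1 s t hs hst htT
  set S : ℕ → ℝ := fun n => ∑ j ∈ Finset.range (2 ^ n), ‖Γ (F n j) (F n (j + 1))‖ with hSdef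
  have hSnn : ∀ n, 0 ≤ S n := fun n => Finset.sum_nonneg fun _ _ => norm_nonneg _
  have hS0 : S 0 = ‖Γ s t‖ := by
    simp only [hSdef, pow_zero, Finset.sum_range_one, hF0]
    norm_num
  have hStend : Tendsto S atTop (nhds 0) :=
    hHii s t hs hst htT F (fun n => (inv n).1) (fun n => (inv n).2.1)
      (fun n j hj => (inv n).2.2.2.1 j hj) (fun n j _ => hFeven n j)
      (fun n j hj => (inv n).2.2.2.2 j hj)
  set E : ℝ := ω0 ^ θ * ω0 with hEdef
  have hEnn : 0 ≤ E := mul_nonneg (Real.rpow_nonneg hω0nn θ) hω0nn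
  -- exponent juggling
  have hq1n : ∀ n : ℕ, ((2:ℝ) ^ (-(n:ℝ))) ^ (1 / p) = q1 ^ n := by
    intro n
    rw [hq1def, ← Real.rpow_natCast ((2:ℝ) ^ (-(1/p))) n, ← Real.rpow_mul two_pos.le,
      ← Real.rpow_mul two_pos.le]
    ring_nf
  have hq2n : ∀ n : ℕ, ((2:ℝ) ^ (-(n:ℝ))) ^ θ = q2 ^ n := by
    intro n
    rw [hq2def, ← Real.rpow_natCast ((2:ℝ) ^ (-θ)) n, ← Real.rpow_mul two_pos.le,
      ← Real.rpow_mul two_pos.le]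
    ring_nf
  -- the step estimate
  have hstep : ∀ n, S n ≤ (1 + C * q1 ^ n) * S (n + 1) + C * q2 ^ n * E := by
    intro n
    have h2n : (2:ℕ) ^ (n + 1) = 2 * 2 ^ n := by rw [pow_succ]; ring
    have hterm : ∀ i ∈ Finset.range (2 ^ n),
        ‖Γ (F n i) (F n (i + 1))‖ ≤
          (1 + C * q1 ^ n) * (‖Γ (F (n+1) (2*i)) (F (n+1) (2*i+1))‖
              + ‖Γ (F (n+1) (2*i+1)) (F (n+1) (2*i+1+1))‖)
            + C * q2 ^ n * (ω0 ^ θ * ω (F n i) (F n (i + 1))) := by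
      intro i hi
      rw [Finset.mem_range] at hi
      have hmemi := (inv n).2.2.1 i hi.le
      have hmemi1 := (inv n).2.2.1 (i + 1) hi
      have hmono := (inv n).2.2.2.1 i hi
      have hωi := (inv n).2.2.2.2 i hi
      have ha0 : 0 ≤ F n i := le_trans hs hmemi.1
      have hbT : F n (i + 1) ≤ T := le_trans hmemi1.2 htT
      have hMsp := hM (F n i, F n (i + 1)) ha0 hmono hbT
      have h21 : 2 * i + 1 + 1 = 2 * (i + 1) := by ring
      rw [hFeven, hFodd, h21, hFeven]
      have hkey := hHi (F n i) (M (F n i, F n (i + 1))) (F n (i + 1)) ha0 hMsp.1 hMsp.2.1 hbT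
      have hωabnn : 0 ≤ ω (F n i) (F n (i + 1)) := hωnn _ _ ha0 hmono hbT
      have h2negn : (0:ℝ) ≤ (2:ℝ) ^ (-(n:ℝ)) := (Real.rpow_pos_of_pos two_pos _).le
      have h1 : ω (F n i) (F n (i + 1)) ^ (1 / p) ≤ q1 ^ n := by
        calc ω (F n i) (F n (i + 1)) ^ (1 / p)
            ≤ ((2:ℝ) ^ (-(n:ℝ)) * ω0) ^ (1 / p) := Real.rpow_le_rpow hωabnn hωi hpinv.le
          _ = ((2:ℝ) ^ (-(n:ℝ))) ^ (1 / p) * ω0 ^ (1 / p) := Real.mul_rpow h2negn hω0nn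
          _ ≤ q1 ^ n * 1 := by
              rw [hq1n]
              exact mul_le_mul_of_nonneg_left
                (Real.rpow_le_one hω0nn hω0le1 hpinv.le) (pow_nonneg hq1pos.le n)
          _ = q1 ^ n := mul_one _
      have h2 : ω (F n i) (F n (i + 1)) ^ ((γ + 1) / p)
          ≤ q2 ^ n * (ω0 ^ θ * ω (F n i) (F n (i + 1))) := by
        rcases eq_or_lt_of_le hωabnn with h0 | h0
        · rw [← h0, Real.zero_rpow (ne_of_gt hepos), mul_zero, mul_zero]
        · have he : (γ + 1) / p = 1 + θ := by rw [hθdef]; ring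
          rw [he, Real.rpow_add h0, Real.rpow_one]
          have h3 : ω (F n i) (F n (i + 1)) ^ θ ≤ q2 ^ n * ω0 ^ θ := by
            calc ω (F n i) (F n (i + 1)) ^ θ
                ≤ ((2:ℝ) ^ (-(n:ℝ)) * ω0) ^ θ := Real.rpow_le_rpow hωabnn hωi hθ.le
              _ = ((2:ℝ) ^ (-(n:ℝ))) ^ θ * ω0 ^ θ := Real.mul_rpow h2negn hω0nn
              _ = q2 ^ n * ω0 ^ θ := by rw [hq2n]
          calc ω (F n i) (F n (i + 1)) * ω (F n i) (F n (i + 1)) ^ θ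
              ≤ ω (F n i) (F n (i + 1)) * (q2 ^ n * ω0 ^ θ) :=
                mul_le_mul_of_nonneg_left h3 h0.le
            _ = q2 ^ n * (ω0 ^ θ * ω (F n i) (F n (i + 1))) := by ring
      have hpairnn : (0:ℝ) ≤ ‖Γ (F n i) (M (F n i, F n (i + 1)))‖
          + ‖Γ (M (F n i, F n (i + 1))) (F n (i + 1))‖ :=
        add_nonneg (norm_nonneg _) (norm_nonneg _)
      have hc1 : (1 + C * ω (F n i) (F n (i + 1)) ^ (1 / p))
            * (‖Γ (F n i) (M (F n i, F n (i + 1)))‖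
              + ‖Γ (M (F n i, F n (i + 1))) (F n (i + 1))‖)
          ≤ (1 + C * q1 ^ n) * (‖Γ (F n i) (M (F n i, F n (i + 1)))‖
              + ‖Γ (M (F n i, F n (i + 1))) (F n (i + 1))‖) := by
        refine mul_le_mul_of_nonneg_right ?_ hpairnn
        have := mul_le_mul_of_nonneg_left h1 hC
        linarith
      have hc2 : C * ω (F n i) (F n (i + 1)) ^ ((γ + 1) / p)
          ≤ C * q2 ^ n * (ω0 ^ θ * ω (F n i) (F n (i + 1))) := by
        calc C * ω (F n i) (F n (i + 1)) ^ ((γ + 1) / p)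
            ≤ C * (q2 ^ n * (ω0 ^ θ * ω (F n i) (F n (i + 1)))) :=
              mul_le_mul_of_nonneg_left h2 hC
          _ = C * q2 ^ n * (ω0 ^ θ * ω (F n i) (F n (i + 1))) := by ring
      linarith
    have hsplit : ∑ i ∈ Finset.range (2 ^ n),
          ((1 + C * q1 ^ n) * (‖Γ (F (n+1) (2*i)) (F (n+1) (2*i+1))‖
              + ‖Γ (F (n+1) (2*i+1)) (F (n+1) (2*i+1+1))‖)
            + C * q2 ^ n * (ω0 ^ θ * ω (F n i) (F n (i + 1))))
        = (1 + C * q1 ^ n) * S (n + 1)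
          + C * q2 ^ n * ω0 ^ θ
            * ∑ i ∈ Finset.range (2 ^ n), ω (F n i) (F n (i + 1)) := by
      have hSn1 : S (n + 1) = ∑ i ∈ Finset.range (2 ^ n),
          (‖Γ (F (n+1) (2*i)) (F (n+1) (2*i+1))‖
            + ‖Γ (F (n+1) (2*i+1)) (F (n+1) (2*i+1+1))‖) := by
        simp only [hSdef]
        rw [h2n, sum_range_two_mul' (fun j => ‖Γ (F (n+1) j) (F (n+1) (j+1))‖)]
      rw [Finset.sum_add_distrib, ← Finset.mul_sum, ← Finset.mul_sum, ← Finset.mul_sum, hSn1]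
      ring
    have hfin : C * q2 ^ n * ω0 ^ θ
          * ∑ i ∈ Finset.range (2 ^ n), ω (F n i) (F n (i + 1))
        ≤ C * q2 ^ n * E := by
      have hnn : (0:ℝ) ≤ C * q2 ^ n * ω0 ^ θ :=
        mul_nonneg (mul_nonneg hC (pow_nonneg hq2pos.le n)) (Real.rpow_nonneg hω0nn θ)
      calc C * q2 ^ n * ω0 ^ θ * ∑ i ∈ Finset.range (2 ^ n), ω (F n i) (F n (i + 1))
          ≤ C * q2 ^ n * ω0 ^ θ * ω0 := mul_le_mul_of_nonneg_left (hsumω n) hnn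
        _ = C * q2 ^ n * E := by rw [hEdef]; ring
    calc S n ≤ ∑ i ∈ Finset.range (2 ^ n),
          ((1 + C * q1 ^ n) * (‖Γ (F (n+1) (2*i)) (F (n+1) (2*i+1))‖
              + ‖Γ (F (n+1) (2*i+1)) (F (n+1) (2*i+1+1))‖)
            + C * q2 ^ n * (ω0 ^ θ * ω (F n i) (F n (i + 1)))) :=
          Finset.sum_le_sum hterm
      _ = (1 + C * q1 ^ n) * S (n + 1)
          + C * q2 ^ n * ω0 ^ θ
            * ∑ i ∈ Finset.range (2 ^ n), ω (F n i) (F n (i + 1)) := hsplit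
      _ ≤ (1 + C * q1 ^ n) * S (n + 1) + C * q2 ^ n * E := by linarith
  -- iteration
  set P : ℕ → ℝ := fun N => ∏ n ∈ Finset.range N, (1 + C * q1 ^ n) with hPdef
  have hA1 : ∀ n, (1:ℝ) ≤ 1 + C * q1 ^ n := by
    intro n
    have : (0:ℝ) ≤ C * q1 ^ n := mul_nonneg hC (pow_nonneg hq1pos.le n)
    linarith
  have hPpos : ∀ N, 0 < P N := by
    intro N
    refine Finset.prod_pos fun n _ => ?_
    have := hA1 n; linarith
  have hPmono : ∀ N, P N ≤ P (N + 1) := by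
    intro N
    have : P (N + 1) = P N * (1 + C * q1 ^ N) := Finset.prod_range_succ _ N
    rw [this]
    nlinarith [hPpos N, hA1 N]
  have hPK : ∀ N, P N ≤ K := by
    intro N
    have h1 : P N ≤ ∏ n ∈ Finset.range N, Real.exp (C * q1 ^ n) := by
      refine Finset.prod_le_prod (fun n _ => ?_) (fun n _ => ?_)
      · have := hA1 n; linarith
      · have := Real.add_one_le_exp (C * q1 ^ n); linarith
    rw [← Real.exp_sum] at h1
    refine le_trans h1 (Real.exp_le_exp.mpr ?_)
    rw [← Finset.mul_sum]
    exact mul_le_mul_of_nonneg_left (geom_sum_le_inv' hq1pos.le hq1lt N) hC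
  have hRnn : ∀ N, (0:ℝ) ≤ ∑ n ∈ Finset.range N, C * q2 ^ n * E := by
    intro N
    refine Finset.sum_nonneg fun n _ => ?_
    exact mul_nonneg (mul_nonneg hC (pow_nonneg hq2pos.le n)) hEnn
  have hRle : ∀ N, ∑ n ∈ Finset.range N, C * q2 ^ n * E ≤ C * (1 - q2)⁻¹ * E := by
    intro N
    have h1 : ∑ n ∈ Finset.range N, C * q2 ^ n * E
        = C * E * ∑ n ∈ Finset.range N, q2 ^ n := by
      rw [Finset.mul_sum]
      exact Finset.sum_congr rfl fun n _ => by ring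
    rw [h1]
    calc C * E * ∑ n ∈ Finset.range N, q2 ^ n
        ≤ C * E * (1 - q2)⁻¹ :=
          mul_le_mul_of_nonneg_left (geom_sum_le_inv' hq2pos.le hq2lt N) (mul_nonneg hC hEnn)
      _ = C * (1 - q2)⁻¹ * E := by ring
  have hiter : ∀ N, S 0 ≤ P N * S N + P N * ∑ n ∈ Finset.range N, C * q2 ^ n * E := by
    intro N
    induction N with
    | zero => simp [hPdef]
    | succ N ih =>
      have h1 : P N * S N ≤ P N * ((1 + C * q1 ^ N) * S (N + 1) + C * q2 ^ N * E) :=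
        mul_le_mul_of_nonneg_left (hstep N) (hPpos N).le
      have h2 : P (N + 1) = P N * (1 + C * q1 ^ N) := Finset.prod_range_succ _ N
      have h3 : ∑ n ∈ Finset.range (N + 1), C * q2 ^ n * E
          = (∑ n ∈ Finset.range N, C * q2 ^ n * E) + C * q2 ^ N * E :=
        Finset.sum_range_succ _ N
      have h4 : P N * ∑ n ∈ Finset.range (N + 1), C * q2 ^ n * E
          ≤ P (N + 1) * ∑ n ∈ Finset.range (N + 1), C * q2 ^ n * E :=
        mul_le_mul_of_nonneg_right (hPmono N) (hRnn (N + 1))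
      calc S 0 ≤ P N * S N + P N * ∑ n ∈ Finset.range N, C * q2 ^ n * E := ih
        _ ≤ P N * ((1 + C * q1 ^ N) * S (N + 1) + C * q2 ^ N * E)
            + P N * ∑ n ∈ Finset.range N, C * q2 ^ n * E := by linarith
        _ = P (N + 1) * S (N + 1)
            + P N * ∑ n ∈ Finset.range (N + 1), C * q2 ^ n * E := by
            rw [h2, h3]; ring
        _ ≤ P (N + 1) * S (N + 1)
            + P (N + 1) * ∑ n ∈ Finset.range (N + 1), C * q2 ^ n * E := by linarith
  have hfinal : ∀ N, S 0 ≤ K * S N + K * (C * (1 - q2)⁻¹ * E) := by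
    intro N
    have h1 : P N * S N ≤ K * S N := mul_le_mul_of_nonneg_right (hPK N) (hSnn N)
    have h2 : P N * ∑ n ∈ Finset.range N, C * q2 ^ n * E ≤ K * (C * (1 - q2)⁻¹ * E) := by
      calc P N * ∑ n ∈ Finset.range N, C * q2 ^ n * E
          ≤ P N * (C * (1 - q2)⁻¹ * E) := mul_le_mul_of_nonneg_left (hRle N) (hPpos N).le
        _ ≤ K * (C * (1 - q2)⁻¹ * E) := by
            refine mul_le_mul_of_nonneg_right (hPK N) ?_
            have h3 : (0:ℝ) ≤ (1 - q2)⁻¹ := inv_nonneg.mpr (by linarith)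
            exact mul_nonneg (mul_nonneg hC h3) hEnn
    linarith [hiter N]
  have hlim : Tendsto (fun N => K * S N + K * (C * (1 - q2)⁻¹ * E)) atTop
      (nhds (K * 0 + K * (C * (1 - q2)⁻¹ * E))) :=
    ((hStend.const_mul K).add tendsto_const_nhds)
  have hS0le : S 0 ≤ K * 0 + K * (C * (1 - q2)⁻¹ * E) := ge_of_tendsto' hlim hfinal
  have hE2 : E ≤ ω0 ^ ((γ + 1) / p) := by
    rcases eq_or_lt_of_le hω0nn with h0 | h0
    · rw [hEdef, ← h0, Real.zero_rpow (ne_of_gt hepos)]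
      simp
    · have he : (γ + 1) / p = θ + 1 := by rw [hθdef]; ring
      rw [hEdef, he, Real.rpow_add h0, Real.rpow_one]
  calc ‖Γ s t‖ = S 0 := hS0.symm
    _ ≤ K * 0 + K * (C * (1 - q2)⁻¹ * E) := hS0le
    _ = K * (C * (1 - q2)⁻¹) * E := by ring
    _ ≤ K * (C * (1 - q2)⁻¹) * ω0 ^ ((γ + 1) / p) := by
        refine mul_le_mul_of_nonneg_left hE2 ?_
        have h3 : (0:ℝ) ≤ (1 - q2)⁻¹ := inv_nonneg.mpr (by linarith)
        exact mul_nonneg hKpos.le (mul_nonneg hC h3)
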